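/- arXiv:1906.11732 — 4 statements merged into one kernel-verified Lean document; each statement's English description precedes it below -/
import Mathlib

section
/- Let Z = (Z_1, ..., Z_d) be a continuous random vector on ℝ^d whose law has a density with respect to Lebesgue measure of the form h(z) = c · K((z − μ)ᵀ Ω (z − μ)) for some measurable function K: ℝ → [0,∞), normalizing constant c > 0, mean vector μ with E Z_k = μ_k, and positive definite matrix Ω, and suppose each coordinate has finite variance Var(Z_k) = σ_k² < ∞. Let f*: ℝ^d → ℝ^p be a function whose partial derivatives ∂f*_q/∂z_l exist and are continuous almost everywhere, with E|Z_k f*_q(Z^{∖k})| < ∞. If Cov(Z_k, Z_{k'}) = 0 for all k ≠ k', then Cov(Z_k, f*_q(Z^{∖k})) = 0 for all k = 1,...,d and q = 1,...,p, where Z^{∖k} is Z with its k-th coordinate replaced by a fixed constant c_k. -/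
open MeasureTheory ProbabilityTheory Matrix
open scoped ENNReal NNReal

/-- Covariance of two real random variables. -/
noncomputable def covar {Ω : Type*} [MeasurableSpace Ω] (P : Measure Ω) (A B : Ω → ℝ) : ℝ :=
  ∫ ω, (A ω - ∫ ω', A ω' ∂P) * (B ω - ∫ ω', B ω' ∂P) ∂P

section Helpers

lemma my_map_withDensity {α : Type*} [MeasurableSpace α] (μ : Measure α)
    {T : α → α} (hT : Measurable T) {ρ : α → ℝ≥0∞} (hρ : Measurable ρ) :
    Measure.map T (μ.withDensity (fun x => ρ (T x))) = (Measure.map T μ).withDensity ρ := by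
  ext s hs
  rw [Measure.map_apply hT hs, withDensity_apply _ (hT hs), withDensity_apply _ hs,
    setLIntegral_map hs hρ hT]

variable {d : ℕ}

lemma my_map_affine_volume (B : Matrix (Fin d) (Fin d) ℝ) (h1 : |B.det| = 1) (w : Fin d → ℝ) :
    Measure.map (fun z : Fin d → ℝ => w + B *ᵥ z) volume = volume := by
  have hB : B.det ≠ 0 := by
    intro h; rw [h] at h1; simp at h1
  have hlin : Measurable (Matrix.toLin' B) :=
    (Matrix.toLin' B).continuous_of_finiteDimensional.measurable
  have hcomp : (fun z : Fin d → ℝ => w + B *ᵥ z) = (fun z => w + z) ∘ ⇑(Matrix.toLin' B) := by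
    ext z a; simp [Matrix.toLin'_apply]
  have hadd : Measurable fun z : Fin d → ℝ => w + z := measurable_const.add measurable_id
  rw [hcomp, ← Measure.map_map hadd hlin,
    Real.map_matrix_volume_pi_eq_smul_volume_pi hB, Measure.map_smul,
    abs_inv, h1]
  simp [map_add_left_eq_self]

lemma my_integral_affine_inv (ρ : (Fin d → ℝ) → ℝ≥0∞) (hρ : Measurable ρ)
    (B : Matrix (Fin d) (Fin d) ℝ) (h1 : |B.det| = 1) (w : Fin d → ℝ)
    (hinv : ∀ z, ρ (w + B *ᵥ z) = ρ z)
    (φ : (Fin d → ℝ) → ℝ) (hφ : Measurable φ) :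
    ∫ z, φ z ∂(volume.withDensity ρ) = ∫ z, φ (w + B *ᵥ z) ∂(volume.withDensity ρ) := by
  have hlin : Measurable fun z : Fin d → ℝ => B *ᵥ z := by
    have : Measurable (Matrix.toLin' B) :=
      (Matrix.toLin' B).continuous_of_finiteDimensional.measurable
    convert this using 1
    funext z
    simp [Matrix.toLin'_apply]
  have hT : Measurable fun z : Fin d → ℝ => w + B *ᵥ z := hlin.const_add w
  have hρT : (fun x => ρ (w + B *ᵥ x)) = ρ := funext hinv
  have hmap := my_map_withDensity (volume : Measure (Fin d → ℝ)) hT hρ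
  rw [hρT, my_map_affine_volume B h1 w] at hmap
  conv_lhs => rw [← hmap]
  rw [integral_map hT.aemeasurable hφ.aestronglyMeasurable]

lemma my_integral_anti_zero (ρ : (Fin d → ℝ) → ℝ≥0∞) (hρ : Measurable ρ)
    (B : Matrix (Fin d) (Fin d) ℝ) (h1 : |B.det| = 1) (w : Fin d → ℝ)
    (hinv : ∀ z, ρ (w + B *ᵥ z) = ρ z)
    (φ : (Fin d → ℝ) → ℝ) (hφ : Measurable φ)
    (hanti : ∀ z, φ (w + B *ᵥ z) = -φ z) :
    ∫ z, φ z ∂(volume.withDensity ρ) = 0 := by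
  have h := my_integral_affine_inv ρ hρ B h1 w hinv φ hφ
  simp_rw [hanti, integral_neg] at h
  linarith

lemma my_integrable_mul {α : Type*} [MeasurableSpace α] {P : Measure α}
    {f g : α → ℝ} (hf : MemLp f 2 P) (hg : MemLp g 2 P) :
    Integrable (fun ω => f ω * g ω) P := by
  have h1 := (hf.add hg).integrable_sq
  have h2 := hf.integrable_sq
  have h3 := hg.integrable_sq
  have he : (fun ω => f ω * g ω)
      = fun ω => (((f ω + g ω) ^ 2 - f ω ^ 2) - g ω ^ 2) / 2 := by
    ext ω; ring
  rw [he]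
  exact (((h1.sub h2).sub h3).div_const 2)

end Helpers

/-- **Maximal disentanglement under an uncorrelated elliptical encoder.**
If `Z` has an elliptical Lebesgue density `z ↦ cst · K((z−μ)ᵀ Ω (z−μ))` with `Ω` positive
definite, mean `μ`, finite coordinate variances, pairwise zero covariances, and `f` has
a.e. continuous partial derivatives with `E|Z_k f_q(Z^{∖k})| < ∞`, then
`Cov(Z_k, f_q(Z^{∖k})) = 0` for all `k` and `q`. -/
theorem disentanglement_uncorrelated_elliptical
    {Ω : Type*} [MeasurableSpace Ω] (P : Measure Ω) [IsProbabilityMeasure P]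
    (d p : ℕ) (Z : Ω → Fin d → ℝ) (hZmeas : Measurable Z)
    (μv : Fin d → ℝ) (Ωm : Matrix (Fin d) (Fin d) ℝ) (hΩ : Ωm.PosDef)
    (K : ℝ → ℝ) (hKmeas : Measurable K) (hKnonneg : ∀ t, 0 ≤ K t)
    (cst : ℝ) (hcst : 0 < cst)
    (hdens : Measure.map Z P
      = (volume : Measure (Fin d → ℝ)).withDensity
          fun z => ENNReal.ofReal (cst * K ((z - μv) ⬝ᵥ (Ωm *ᵥ (z - μv)))))
    (hmean : ∀ k, ∫ ω, Z ω k ∂P = μv k)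
    (σ : Fin d → ℝ)
    (hL2 : ∀ k, MemLp (fun ω => Z ω k) 2 P)
    (hvar : ∀ k, variance (fun ω => Z ω k) P = (σ k) ^ 2)
    (huncorr : ∀ k k', k ≠ k' → covar P (fun ω => Z ω k) (fun ω => Z ω k') = 0)
    (c : Fin d → ℝ)
    (f : Fin p → (Fin d → ℝ) → ℝ) (hfmeas : ∀ q, Measurable (f q))
    (pd : Fin p → Fin d → (Fin d → ℝ) → ℝ)
    (hderiv : ∀ q l, ∀ᵐ z ∂(volume : Measure (Fin d → ℝ)),
      HasDerivAt (fun t => f q (Function.update z l t)) (pd q l z) (z l))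
    (hcont : ∀ q l, ∀ᵐ z ∂(volume : Measure (Fin d → ℝ)), ContinuousAt (pd q l) z)
    (hint : ∀ k q, Integrable (fun ω => Z ω k * f q (Function.update (Z ω) k (c k))) P)
    (k : Fin d) (q : Fin p) :
    covar P (fun ω => Z ω k) (fun ω => f q (Function.update (Z ω) k (c k))) = 0 := by
  classical
  set ρ : (Fin d → ℝ) → ℝ≥0∞ :=
    fun z => ENNReal.ofReal (cst * K ((z - μv) ⬝ᵥ (Ωm *ᵥ (z - μv)))) with hρdef
  have hQmeas : Measurable fun z : Fin d → ℝ => (z - μv) ⬝ᵥ (Ωm *ᵥ (z - μv)) := by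
    simp only [dotProduct, Matrix.mulVec, Pi.sub_apply]
    exact Finset.measurable_sum _ fun i _ =>
      ((measurable_pi_apply i).sub measurable_const).mul
        (Finset.measurable_sum _ fun j _ =>
          measurable_const.mul ((measurable_pi_apply j).sub measurable_const))
  have hρmeas : Measurable ρ := ((hKmeas.comp hQmeas).const_mul cst).ennreal_ofReal
  -- square root of Ω
  have hΩps := hΩ.posSemidef
  open scoped MatrixOrder in
  set Rm := CFC.sqrt Ωm with hRmdef
  open scoped MatrixOrder in
  have hRps : Rm.PosSemidef := (CFC.sqrt_nonneg Ωm).posSemidef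
  have hRsymm : ∀ a b, Rm a b = Rm b a := by
    intro a b
    have h := hRps.1
    have h2 := congrFun (congrFun h b) a
    simpa [Matrix.conjTranspose_apply] using h2
  open scoped MatrixOrder in
  have hRR : Rm * Rm = Ωm := CFC.sqrt_mul_sqrt_self Ωm hΩps.nonneg
  have hdetR : Rm.det ≠ 0 := by
    intro h
    have hpos := hΩ.det_pos
    rw [← hRR, Matrix.det_mul, h, mul_zero] at hpos
    exact lt_irrefl _ hpos
  have hQform : ∀ z : Fin d → ℝ,
      (z - μv) ⬝ᵥ (Ωm *ᵥ (z - μv)) = (Rm *ᵥ (z - μv)) ⬝ᵥ (Rm *ᵥ (z - μv)) := by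
    intro z
    rw [← hRR, ← Matrix.mulVec_mulVec, Matrix.dotProduct_mulVec]
    congr 1
    have ht : Rmᵀ = Rm := by
      ext a b; rw [Matrix.transpose_apply, hRsymm]
    conv_lhs => rw [← ht]
    rw [Matrix.vecMul_transpose]
  -- flip matrices
  set Fl : Fin d → Matrix (Fin d) (Fin d) ℝ :=
    fun i => Matrix.diagonal (fun a => if a = i then (-1 : ℝ) else 1) with hFldef
  have hFdet : ∀ i, (Fl i).det = -1 := by
    intro i
    rw [hFldef]
    rw [Matrix.det_diagonal]
    rw [Finset.prod_eq_single i (fun b _ hb => if_neg hb) (by simp)]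
    simp
  have hFabs : ∀ i, |(Fl i).det| = 1 := by intro i; rw [hFdet]; simp
  have hFmv : ∀ i (x : Fin d → ℝ) a, ((Fl i) *ᵥ x) a = (if a = i then -1 else 1) * x a := by
    intro i x a; rw [hFldef]; rw [Matrix.mulVec_diagonal]
  have hFdot : ∀ i (x : Fin d → ℝ), ((Fl i) *ᵥ x) ⬝ᵥ ((Fl i) *ᵥ x) = x ⬝ᵥ x := by
    intro i x
    simp only [dotProduct]
    refine Finset.sum_congr rfl fun a _ => ?_
    rw [hFmv]
    by_cases h : a = i <;> simp [h] <;> ring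
  -- coordinate measurability
  have hcoord : ∀ aa : Fin d, Measurable fun z : Fin d → ℝ => (Rm *ᵥ (z - μv)) aa := by
    intro aa
    simp only [Matrix.mulVec, dotProduct, Pi.sub_apply]
    exact Finset.measurable_sum _ fun b _ =>
      measurable_const.mul ((measurable_pi_apply b).sub measurable_const)
  -- vanishing of mixed second moments under ν
  have hmoment : ∀ i j : Fin d, i ≠ j →
      ∫ z, (Rm *ᵥ (z - μv)) i * (Rm *ᵥ (z - μv)) j ∂(volume.withDensity ρ) = 0 := by
    intro i j hij
    set Bm := Rm⁻¹ * (Fl i * Rm) with hBmdef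
    have hdetB : |Bm.det| = 1 := by
      rw [hBmdef, Matrix.det_mul, Matrix.det_mul, Matrix.det_nonsing_inv, hFdet]
      rw [Ring.inverse_eq_inv']
      have hh : Rm.det⁻¹ * (-1 * Rm.det) = -1 := by field_simp
      rw [hh]; simp
    have hRB : Rm * Bm = Fl i * Rm :=
      Matrix.mul_nonsing_inv_cancel_left _ _ (isUnit_iff_ne_zero.mpr hdetR)
    set wv := μv - Bm *ᵥ μv with hwvdef
    have hTv : ∀ z : Fin d → ℝ, (wv + Bm *ᵥ z) - μv = Bm *ᵥ (z - μv) := by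
      intro z; rw [Matrix.mulVec_sub, hwvdef]; abel
    have hu : ∀ z, Rm *ᵥ ((wv + Bm *ᵥ z) - μv) = (Fl i) *ᵥ (Rm *ᵥ (z - μv)) := by
      intro z; rw [hTv, Matrix.mulVec_mulVec, hRB, ← Matrix.mulVec_mulVec]
    have hρinv : ∀ z, ρ (wv + Bm *ᵥ z) = ρ z := by
      intro z
      simp only [hρdef]
      congr 2
      rw [hQform, hQform, hu, hFdot]
    refine my_integral_anti_zero ρ hρmeas Bm hdetB wv hρinv _ ((hcoord i).mul (hcoord j)) ?_
    intro z
    show (Rm *ᵥ ((wv + Bm *ᵥ z) - μv)) i * (Rm *ᵥ ((wv + Bm *ᵥ z) - μv)) j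
        = -((Rm *ᵥ (z - μv)) i * (Rm *ᵥ (z - μv)) j)
    rw [hu, hFmv, hFmv, if_pos rfl, if_neg (Ne.symm hij)]
    ring
  -- transfer integrals to P
  have htransfer : ∀ i j : Fin d,
      ∫ ω, (Rm *ᵥ (Z ω - μv)) i * (Rm *ᵥ (Z ω - μv)) j ∂P
        = ∫ z, (Rm *ᵥ (z - μv)) i * (Rm *ᵥ (z - μv)) j ∂(volume.withDensity ρ) := by
    intro i j
    rw [← hdens, integral_map (f := fun z : Fin d → ℝ =>
        (Rm *ᵥ (z - μv)) i * (Rm *ᵥ (z - μv)) j) hZmeas.aemeasurable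
      ((hcoord i).mul (hcoord j)).aestronglyMeasurable]
  -- second moments of Z
  have hva2 : ∀ a, MemLp (fun ω => Z ω a - μv a) 2 P := fun a => (hL2 a).sub (memLp_const _)
  have hvint : ∀ a b, Integrable (fun ω => (Z ω a - μv a) * (Z ω b - μv b)) P :=
    fun a b => my_integrable_mul (hva2 a) (hva2 b)
  have hvv : ∀ a b : Fin d, ∫ ω, (Z ω a - μv a) * (Z ω b - μv b) ∂P
      = if a = b then σ a ^ 2 else 0 := by
    intro a b
    by_cases h : a = b
    · subst h
      rw [if_pos rfl]
      refine Eq.trans ?_ (hvar a)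
      rw [variance_eq_integral (hL2 a).aemeasurable]
      refine integral_congr_ae (Filter.Eventually.of_forall fun ω => ?_)
      simp only [Pi.pow_apply, Pi.sub_apply, hmean a]
      ring
    · rw [if_neg h]
      have hc := huncorr a b h
      simp only [covar, hmean] at hc
      exact hc
  set Dm := Matrix.diagonal (fun a => σ a ^ 2) with hDmdef
  have hGint : ∀ i j : Fin d, ∫ ω, (Rm *ᵥ (Z ω - μv)) i * (Rm *ᵥ (Z ω - μv)) j ∂P
      = (Rm * Dm * Rm) i j := by
    intro i j
    have e1 : ∀ ω, (Rm *ᵥ (Z ω - μv)) i * (Rm *ᵥ (Z ω - μv)) j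
        = ∑ a, ∑ b, (Rm i a * Rm j b) * ((Z ω a - μv a) * (Z ω b - μv b)) := by
      intro ω
      simp only [Matrix.mulVec, dotProduct, Pi.sub_apply]
      rw [Finset.sum_mul_sum]
      exact Finset.sum_congr rfl fun a _ => Finset.sum_congr rfl fun b _ => by ring
    simp_rw [e1]
    rw [integral_finset_sum _ (fun a _ =>
      integrable_finset_sum _ (fun b _ => ((hvint a b).const_mul _)))]
    have e2 : ∀ a : Fin d,
        ∫ ω, ∑ b, (Rm i a * Rm j b) * ((Z ω a - μv a) * (Z ω b - μv b)) ∂P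
          = ∑ b, (Rm i a * Rm j b) * (if a = b then σ a ^ 2 else 0) := by
      intro a
      rw [integral_finset_sum _ (fun b _ => ((hvint a b).const_mul _))]
      refine Finset.sum_congr rfl fun b _ => ?_
      rw [integral_const_mul, hvv]
    rw [Finset.sum_congr rfl fun a _ => e2 a]
    rw [Matrix.mul_apply]
    refine Finset.sum_congr rfl fun a _ => ?_
    simp only [Matrix.mul_diagonal, hDmdef, mul_ite, mul_zero, Finset.sum_ite_eq,
      Finset.mem_univ, if_true]
    rw [hRsymm a j]
    ring
  -- σ a ≠ 0
  have hσ2 : ∀ a, σ a ^ 2 ≠ 0 := by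
    intro a ha
    have hvz : variance (fun ω => Z ω a) P = 0 := by rw [hvar a, ha]
    have hev : evariance (fun ω => Z ω a) P = 0 := by
      have hlt := (hL2 a).evariance_lt_top
      rw [variance] at hvz
      exact ((ENNReal.toReal_eq_zero_iff _).mp hvz).resolve_right hlt.ne
    have hae := (evariance_eq_zero_iff (hL2 a).aestronglyMeasurable.aemeasurable).mp hev
    rw [hmean a] at hae
    have hSm : MeasurableSet {z : Fin d → ℝ | z a = μv a} :=
      measurableSet_eq_fun (measurable_pi_apply a) measurable_const
    have hmsetω : MeasurableSet {ω | Z ω a = μv a} :=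
      measurableSet_eq_fun ((measurable_pi_apply a).comp hZmeas) measurable_const
    have hc : P {ω | Z ω a = μv a}ᶜ = 0 := by
      rw [Filter.EventuallyEq, ae_iff] at hae
      exact hae
    have h1 : P {ω | Z ω a = μv a} = 1 := (prob_compl_eq_zero_iff hmsetω).mp hc
    have h2 : Measure.map Z P {z | z a = μv a} = 1 := by
      rw [Measure.map_apply hZmeas hSm]; exact h1
    have h3 : Measure.map Z P {z | z a = μv a} = 0 := by
      rw [hdens]
      refine withDensity_absolutelyContinuous _ _ ?_
      rw [MeasureTheory.volume_pi]
      exact MeasureTheory.Measure.pi_hyperplane _ a _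
    rw [h2] at h3; exact one_ne_zero h3
  have habs0 : ∀ a, |σ a| ≠ 0 := by
    intro a h
    exact hσ2 a (by rw [abs_eq_zero] at h; rw [h]; ring)
  -- the matrix G = R D R is diagonal with nonnegative diagonal
  set g := fun i => (Rm * Dm * Rm) i i with hgdef
  have hGoff : ∀ i j, i ≠ j → (Rm * Dm * Rm) i j = 0 := by
    intro i j hij
    rw [← hGint i j, htransfer i j]
    exact hmoment i j hij
  have hGdiagpos : ∀ i, 0 ≤ g i := by
    intro i
    have hgi : g i = (Rm * Dm * Rm) i i := rfl
    rw [hgi, ← hGint i i]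
    exact integral_nonneg fun ω => mul_self_nonneg _
  have hGmatdiag : Rm * Dm * Rm = Matrix.diagonal g := by
    ext i j
    by_cases h : i = j
    · subst h; rw [Matrix.diagonal_apply_eq]
    · rw [Matrix.diagonal_apply_ne _ h]; exact hGoff i j h
  -- positive semidefinite square root uniqueness forces R diagonal
  set Dh := Matrix.diagonal (fun a => |σ a|) with hDhdef
  have hDh2 : Dh * Dh = Dm := by
    rw [hDhdef, hDmdef, Matrix.diagonal_mul_diagonal]
    exact congrArg Matrix.diagonal (funext fun a => by
      show |σ a| * |σ a| = σ a ^ 2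
      rw [abs_mul_abs_self, sq])
  have hDhH : Dhᴴ = Dh := by
    rw [hDhdef, Matrix.diagonal_conjTranspose]
    exact congrArg Matrix.diagonal (funext fun a => by simp)
  set Sm := Dh * Rm * Dh with hSmdef
  have hSps : Sm.PosSemidef := by
    have h := hRps.mul_mul_conjTranspose_same Dh
    rwa [hDhH] at h
  have hSsq : Sm * Sm = Matrix.diagonal (fun i => |σ i| * g i * |σ i|) := by
    have e1 : Sm * Sm = Dh * (Rm * Dm * Rm) * Dh := by
      rw [hSmdef, ← hDh2]
      simp only [Matrix.mul_assoc]
    rw [e1, hGmatdiag, hDhdef, Matrix.diagonal_mul_diagonal, Matrix.diagonal_mul_diagonal]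
  have hmnn : ∀ i, 0 ≤ |σ i| * g i * |σ i| := fun i =>
    mul_nonneg (mul_nonneg (abs_nonneg _) (hGdiagpos i)) (abs_nonneg _)
  set t := fun i => Real.sqrt (|σ i| * g i * |σ i|) with htdef
  have hDtps : (Matrix.diagonal t).PosSemidef :=
    Matrix.posSemidef_diagonal_iff.mpr fun i => Real.sqrt_nonneg _
  have hDtsq : Sm ^ 2 = (Matrix.diagonal t) ^ 2 := by
    rw [pow_two, pow_two, hSsq, Matrix.diagonal_mul_diagonal]
    exact congrArg Matrix.diagonal (funext fun i => by
      show |σ i| * g i * |σ i| = t i * t i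
      exact (Real.mul_self_sqrt (hmnn i)).symm)
  open scoped MatrixOrder in
  have hSD : Sm = Matrix.diagonal t := by
    rw [← CFC.sqrt_sq Sm hSps.nonneg, hDtsq, CFC.sqrt_sq _ hDtps.nonneg]
  have hRoff : ∀ i j, i ≠ j → Rm i j = 0 := by
    intro i j hij
    have h0 : Sm i j = 0 := by rw [hSD, Matrix.diagonal_apply_ne _ hij]
    have he : Sm i j = |σ i| * Rm i j * |σ j| := by
      rw [hSmdef, hDhdef, Matrix.mul_diagonal, Matrix.diagonal_mul]
    rw [he] at h0
    rcases mul_eq_zero.mp h0 with h | h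
    · rcases mul_eq_zero.mp h with h' | h'
      · exact absurd h' (habs0 i)
      · exact h'
    · exact absurd h (habs0 j)
  have hΩoff : ∀ i j, i ≠ j → Ωm i j = 0 := by
    intro i j hij
    rw [← hRR, Matrix.mul_apply]
    apply Finset.sum_eq_zero
    intro a _
    by_cases h : a = i
    · subst h; rw [hRoff a j hij, mul_zero]
    · rw [hRoff i a (fun hh => h hh.symm), zero_mul]
  have hΩdiag : Ωm = Matrix.diagonal (fun i => Ωm i i) := by
    ext i j
    by_cases h : i = j
    · subst h; rw [Matrix.diagonal_apply_eq]
    · rw [Matrix.diagonal_apply_ne _ h]; exact hΩoff i j h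
  -- final symmetry argument in coordinate k
  set wk := μv - (Fl k) *ᵥ μv with hwkdef
  have hTk : ∀ z : Fin d → ℝ, (wk + (Fl k) *ᵥ z) - μv = (Fl k) *ᵥ (z - μv) := by
    intro z; rw [Matrix.mulVec_sub, hwkdef]; abel
  have hρk : ∀ z, ρ (wk + (Fl k) *ᵥ z) = ρ z := by
    intro z
    simp only [hρdef]
    congr 2
    have hdd : ∀ x : Fin d → ℝ, ((Fl k) *ᵥ x) ⬝ᵥ (Ωm *ᵥ ((Fl k) *ᵥ x)) = x ⬝ᵥ (Ωm *ᵥ x) := by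
      intro x
      rw [hΩdiag]
      simp only [dotProduct, Matrix.mulVec_diagonal]
      refine Finset.sum_congr rfl fun a _ => ?_
      rw [hFmv]
      by_cases h : a = k <;> simp [h] <;> ring
    rw [hTk, hdd]
  have hupd : ∀ z : Fin d → ℝ,
      Function.update (wk + (Fl k) *ᵥ z) k (c k) = Function.update z k (c k) := by
    intro z
    funext a
    by_cases h : a = k
    · subst h; simp [Function.update_self]
    · rw [Function.update_of_ne h, Function.update_of_ne h]
      have h2 := congrFun (hTk z) a
      rw [hFmv, if_neg h, one_mul] at h2
      simp only [Pi.sub_apply] at h2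
      linarith
  have hzk : ∀ z : Fin d → ℝ, (wk + (Fl k) *ᵥ z) k - μv k = -(z k - μv k) := by
    intro z
    have h2 := congrFun (hTk z) k
    rw [hFmv, if_pos rfl] at h2
    simp only [Pi.sub_apply] at h2
    linarith
  have hφmeas : Measurable fun z : Fin d → ℝ => (z k - μv k) * f q (Function.update z k (c k)) :=
    ((measurable_pi_apply k).sub measurable_const).mul
      ((hfmeas q).comp measurable_update_left)
  have hkey : ∫ z, (z k - μv k) * f q (Function.update z k (c k))
      ∂(volume.withDensity ρ) = 0 := by
    refine my_integral_anti_zero ρ hρmeas (Fl k) (hFabs k) wk hρk _ hφmeas ?_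
    intro z
    show ((wk + (Fl k) *ᵥ z) k - μv k) * f q (Function.update (wk + (Fl k) *ᵥ z) k (c k))
        = -((z k - μv k) * f q (Function.update z k (c k)))
    rw [hupd z, hzk z]
    ring
  have hPkey : ∫ ω, (Z ω k - μv k) * f q (Function.update (Z ω) k (c k)) ∂P = 0 := by
    calc ∫ ω, (Z ω k - μv k) * f q (Function.update (Z ω) k (c k)) ∂P
        = ∫ z, (z k - μv k) * f q (Function.update z k (c k)) ∂(Measure.map Z P) :=
          (integral_map hZmeas.aemeasurable hφmeas.aestronglyMeasurable).symm
      _ = 0 := by rw [hdens]; exact hkey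
  -- covariance bookkeeping
  have hAint : Integrable (fun ω => Z ω k) P :=
    (hL2 k).integrable (by norm_num : (1 : ℝ≥0∞) ≤ 2)
  set e := ∫ ω, f q (Function.update (Z ω) k (c k)) ∂P with hedef
  simp only [covar, hmean k]
  rw [← hedef]
  by_cases hBint :
      Integrable (fun ω => (Z ω k - μv k) * f q (Function.update (Z ω) k (c k))) P
  · have hsplit : (fun ω => (Z ω k - μv k) * (f q (Function.update (Z ω) k (c k)) - e))
        = fun ω => (Z ω k - μv k) * f q (Function.update (Z ω) k (c k))
            - e * (Z ω k - μv k) := by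
      funext ω; ring
    have hg2 : Integrable (fun ω => e * (Z ω k - μv k)) P := by
      have h := (hAint.sub (integrable_const (μv k))).const_mul e
      simpa using h
    rw [hsplit, integral_sub hBint hg2, hPkey,
      integral_const_mul, integral_sub hAint (integrable_const _), hmean k, integral_const]
    simp
  · rw [integral_undef]
    intro hcon
    apply hBint
    have hre : (fun ω => (Z ω k - μv k) * f q (Function.update (Z ω) k (c k)))
        = fun ω => (Z ω k - μv k) * (f q (Function.update (Z ω) k (c k)) - e)
            + e * (Z ω k - μv k) := by
      funext ω; ring
    have hg2 : Integrable (fun ω => e * (Z ω k - μv k)) P := by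
      have h := (hAint.sub (integrable_const (μv k))).const_mul e
      simpa using h
    rw [hre]
    exact hcon.add hg2
end

section
/- Let Y be a real random variable with the standard normal distribution N(0,1), and let g: ℝ → ℝ be a differentiable function with E|g'(Y)| < ∞ and E|Y g(Y)| < ∞. Then Cov(Y, g(Y)) = E[Y g(Y)] = E[g'(Y)]. -/
open MeasureTheory ProbabilityTheory Real Set Filter
open scoped ENNReal NNReal Topology

lemma stein_phi_eq (x : ℝ) :
    gaussianPDFReal 0 1 x = (Real.sqrt (2 * π))⁻¹ * Real.exp (-x ^ 2 / 2) := by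
  simp [gaussianPDFReal]

lemma stein_hasDerivAt_phi (x : ℝ) :
    HasDerivAt (gaussianPDFReal 0 1) (-x * gaussianPDFReal 0 1 x) x := by
  have h1 : HasDerivAt (fun y : ℝ => -y ^ 2 / 2) (-x) x := by
    have h := (hasDerivAt_pow 2 x).neg.div_const 2
    refine h.congr_deriv ?_
    norm_num; ring
  have h2 := (h1.exp).const_mul (Real.sqrt (2 * π))⁻¹
  have heq : (fun y => (Real.sqrt (2 * π))⁻¹ * Real.exp (-y ^ 2 / 2)) = gaussianPDFReal 0 1 := by
    funext y; rw [stein_phi_eq]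
  rw [heq] at h2
  refine h2.congr_deriv ?_
  rw [stein_phi_eq]; ring

/-- Core Stein identity with respect to Lebesgue measure. -/
lemma stein_volume (g : ℝ → ℝ) (hg : Differentiable ℝ g)
    (h1 : Integrable (fun x => deriv g x * gaussianPDFReal 0 1 x))
    (h2 : Integrable (fun x => x * g x * gaussianPDFReal 0 1 x)) :
    ∫ x, x * g x * gaussianPDFReal 0 1 x = ∫ x, deriv g x * gaussianPDFReal 0 1 x := by
  set φ : ℝ → ℝ := gaussianPDFReal 0 1 with hφ
  set f : ℝ → ℝ := fun x => g x * φ x with hf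
  set f' : ℝ → ℝ := fun x => deriv g x * φ x - x * g x * φ x with hf'
  have hd : ∀ x, HasDerivAt f (f' x) x := by
    intro x
    have h := ((hg x).hasDerivAt.mul (stein_hasDerivAt_phi x))
    refine h.congr_deriv ?_
    show _ = deriv g x * φ x - x * g x * φ x
    ring
  have hI : Integrable f' := h1.sub h2
  have hmf : AEStronglyMeasurable f volume :=
    (hg.continuous.measurable.mul (measurable_gaussianPDFReal 0 1)).aestronglyMeasurable
  have hdom : ∀ x : ℝ, 1 ≤ |x| → ‖f x‖ ≤ ‖x * g x * φ x‖ := by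
    intro x hx
    simp only [Real.norm_eq_abs, hf]
    calc |g x * φ x| = 1 * |g x * φ x| := (one_mul _).symm
      _ ≤ |x| * |g x * φ x| := mul_le_mul_of_nonneg_right hx (abs_nonneg _)
      _ = |x * (g x * φ x)| := (abs_mul _ _).symm
      _ = |x * g x * φ x| := by rw [mul_assoc]
  have hft : Tendsto f atTop (𝓝 0) := by
    refine tendsto_zero_of_hasDerivAt_of_integrableOn_Ioi (a := 1)
      (fun x _ => hd x) hI.integrableOn ?_
    refine Integrable.mono h2.integrableOn hmf.restrict ?_
    rw [ae_restrict_iff' measurableSet_Ioi]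
    filter_upwards with x hx
    exact hdom x (by rw [abs_of_nonneg (by linarith [hx.out] : (0:ℝ) ≤ x)]; exact hx.out.le)
  have hbt : Tendsto f atBot (𝓝 0) := by
    refine tendsto_zero_of_hasDerivAt_of_integrableOn_Iic (a := -1)
      (fun x _ => hd x) hI.integrableOn ?_
    refine Integrable.mono h2.integrableOn hmf.restrict ?_
    rw [ae_restrict_iff' measurableSet_Iic]
    filter_upwards with x hx
    exact hdom x (by rw [abs_of_nonpos (by linarith [hx.out] : x ≤ 0)]; linarith [hx.out])
  have hIoi : ∫ x in Ioi (0:ℝ), f' x = 0 - f 0 :=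
    integral_Ioi_of_hasDerivAt_of_tendsto (hd 0).continuousAt.continuousWithinAt
      (fun x _ => hd x) hI.integrableOn hft
  have hIic : ∫ x in Iic (0:ℝ), f' x = f 0 - 0 :=
    integral_Iic_of_hasDerivAt_of_tendsto (hd 0).continuousAt.continuousWithinAt
      (fun x _ => hd x) hI.integrableOn hbt
  have htot : ∫ x, f' x = 0 := by
    rw [← intervalIntegral.integral_Iic_add_Ioi (b := (0:ℝ)) hI.integrableOn hI.integrableOn,
      hIoi, hIic]
    ring
  have hsub : ∫ x, f' x = (∫ x, deriv g x * φ x) - ∫ x, x * g x * φ x := integral_sub h1 h2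
  linarith

lemma stein_integral_gaussian_eq (F : ℝ → ℝ) :
    ∫ x, F x ∂(gaussianReal 0 1) = ∫ x, F x * gaussianPDFReal 0 1 x := by
  rw [gaussianReal_of_var_ne_zero 0 one_ne_zero, gaussianPDF_def]
  rw [show (fun x => ENNReal.ofReal (gaussianPDFReal 0 1 x))
      = (fun x => ((fun y => Real.toNNReal (gaussianPDFReal 0 1 y)) x : ℝ≥0∞)) from rfl,
    integral_withDensity_eq_integral_smul
      (show Measurable fun y => Real.toNNReal (gaussianPDFReal 0 1 y) from
        measurable_real_toNNReal.comp (measurable_gaussianPDFReal 0 1)) F]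
  congr 1; funext x
  simp only [NNReal.smul_def, Real.coe_toNNReal _ (gaussianPDFReal_nonneg 0 1 x), smul_eq_mul]
  ring

lemma stein_integrable_gaussian_iff (F : ℝ → ℝ) :
    Integrable F (gaussianReal 0 1) ↔ Integrable (fun x => F x * gaussianPDFReal 0 1 x) volume := by
  rw [gaussianReal_of_var_ne_zero 0 one_ne_zero, gaussianPDF_def]
  rw [integrable_withDensity_iff ((measurable_gaussianPDFReal 0 1).ennreal_ofReal)
    (Filter.Eventually.of_forall fun x => ENNReal.ofReal_lt_top)]
  refine integrable_congr (Filter.Eventually.of_forall fun x => ?_)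
  simp [ENNReal.toReal_ofReal (gaussianPDFReal_nonneg 0 1 x)]

/-- **Stein's lemma for the standard Gaussian.**
If `Y ~ N(0,1)` and `g` is differentiable with `E|g'(Y)| < ∞` and `E|Y g(Y)| < ∞`, then
`Cov(Y, g(Y)) = E[Y g(Y)] = E[g'(Y)]`. -/
theorem stein_lemma_standard_gaussian
    {Ω : Type*} [MeasurableSpace Ω] (P : Measure Ω) [IsProbabilityMeasure P]
    (Y : Ω → ℝ) (hYmeas : Measurable Y)
    (hY : Measure.map Y P = gaussianReal 0 1)
    (g : ℝ → ℝ) (hg : Differentiable ℝ g)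
    (hint1 : Integrable (fun ω => deriv g (Y ω)) P)
    (hint2 : Integrable (fun ω => Y ω * g (Y ω)) P) :
    covar P Y (fun ω => g (Y ω)) = ∫ ω, Y ω * g (Y ω) ∂P ∧
    ∫ ω, Y ω * g (Y ω) ∂P = ∫ ω, deriv g (Y ω) ∂P := by
  have hgc : Continuous g := hg.continuous
  have e1 : ∫ ω, Y ω * g (Y ω) ∂P = ∫ x, x * g x * gaussianPDFReal 0 1 x := by
    calc ∫ ω, Y ω * g (Y ω) ∂P = ∫ x, x * g x ∂(Measure.map Y P) :=
          (integral_map hYmeas.aemeasurable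
            ((measurable_id.mul hgc.measurable).aestronglyMeasurable)).symm
      _ = ∫ x, x * g x ∂(gaussianReal 0 1) := by rw [hY]
      _ = ∫ x, x * g x * gaussianPDFReal 0 1 x := stein_integral_gaussian_eq _
  have e2 : ∫ ω, deriv g (Y ω) ∂P = ∫ x, deriv g x * gaussianPDFReal 0 1 x := by
    calc ∫ ω, deriv g (Y ω) ∂P = ∫ x, deriv g x ∂(Measure.map Y P) :=
          (integral_map hYmeas.aemeasurable (measurable_deriv g).aestronglyMeasurable).symm
      _ = ∫ x, deriv g x ∂(gaussianReal 0 1) := by rw [hY]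
      _ = ∫ x, deriv g x * gaussianPDFReal 0 1 x := stein_integral_gaussian_eq _
  have eY : ∫ ω, Y ω ∂P = ∫ x, x * gaussianPDFReal 0 1 x := by
    calc ∫ ω, Y ω ∂P = ∫ x, x ∂(Measure.map Y P) :=
          (integral_map hYmeas.aemeasurable measurable_id.aestronglyMeasurable).symm
      _ = ∫ x, x ∂(gaussianReal 0 1) := by rw [hY]
      _ = ∫ x, x * gaussianPDFReal 0 1 x := stein_integral_gaussian_eq _
  have h2' : Integrable (fun x => x * g x * gaussianPDFReal 0 1 x) volume := by
    refine (stein_integrable_gaussian_iff (fun x => x * g x)).mp ?_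
    rw [← hY]
    exact (integrable_map_measure
      ((measurable_id.mul hgc.measurable).aestronglyMeasurable) hYmeas.aemeasurable).mpr hint2
  have h1' : Integrable (fun x => deriv g x * gaussianPDFReal 0 1 x) volume := by
    refine (stein_integrable_gaussian_iff (deriv g)).mp ?_
    rw [← hY]
    exact (integrable_map_measure
      (measurable_deriv g).aestronglyMeasurable hYmeas.aemeasurable).mpr hint1
  have hxφ : Integrable (fun x => x * gaussianPDFReal 0 1 x) volume := by
    have h := (integrable_mul_exp_neg_mul_sq (b := 1/2) (by norm_num)).const_mul
      (Real.sqrt (2 * π))⁻¹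
    refine h.congr (Filter.Eventually.of_forall fun x => ?_)
    show (Real.sqrt (2 * π))⁻¹ * (x * rexp (-(1/2) * x ^ 2)) = x * gaussianPDFReal 0 1 x
    rw [stein_phi_eq, show -x ^ 2 / 2 = -(1/2 : ℝ) * x ^ 2 by ring]
    ring
  have hz1 : Integrable (fun x => deriv (fun _ : ℝ => (1:ℝ)) x * gaussianPDFReal 0 1 x)
      volume := by
    simp only [deriv_const', zero_mul]
    exact integrable_zero _ _ _
  have hz2 : Integrable (fun x => x * (fun _ : ℝ => (1:ℝ)) x * gaussianPDFReal 0 1 x)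
      volume := by
    simpa using hxφ
  have hmean : ∫ x, x * gaussianPDFReal 0 1 x = 0 := by
    have hone := stein_volume (fun _ => (1:ℝ)) (differentiable_const 1) hz1 hz2
    simp only [mul_one, deriv_const', zero_mul, integral_zero] at hone
    exact hone
  have eY0 : ∫ ω, Y ω ∂P = 0 := by rw [eY, hmean]
  have hYint : Integrable Y P := by
    have h : Integrable (fun x : ℝ => x) (gaussianReal 0 1) :=
      (stein_integrable_gaussian_iff (fun x => x)).mpr hxφ
    rw [← hY] at h
    exact (integrable_map_measure measurable_id.aestronglyMeasurable hYmeas.aemeasurable).mp h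
  have hmain : ∫ x, x * g x * gaussianPDFReal 0 1 x = ∫ x, deriv g x * gaussianPDFReal 0 1 x :=
    stein_volume g hg h1' h2'
  constructor
  · set b : ℝ := ∫ ω, g (Y ω) ∂P with hb
    calc covar P Y (fun ω => g (Y ω))
        = ∫ ω, (Y ω * g (Y ω) - b * Y ω) ∂P := by
          unfold covar
          congr 1; funext ω; rw [eY0]; ring
      _ = (∫ ω, Y ω * g (Y ω) ∂P) - ∫ ω, b * Y ω ∂P :=
          integral_sub hint2 (hYint.const_mul b)
      _ = ∫ ω, Y ω * g (Y ω) ∂P := by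
          rw [integral_const_mul, eY0, mul_zero, sub_zero]
  · rw [e1, e2, hmain]
end

section
/- Let Y be a real random variable whose law has a density h with respect to Lebesgue measure on ℝ, with E[Y] = 0 and E[Y²] = 1. Then the function w ↦ ∫_{w}^{∞} t h(t) dt is nonnegative for every w ∈ ℝ and integrates to 1 over ℝ, i.e., it is a probability density (the density of the Y-zero-biased distribution). -/
open MeasureTheory Set
open scoped ENNReal NNReal

/-- **The zero-biased density is a probability density.**
If `Y` has Lebesgue density `h`, mean `0` and variance `1`, then
`w ↦ ∫_{w}^{∞} t h(t) dt` is nonnegative everywhere and integrates to `1` over `ℝ`: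
it is the density of the `Y`-zero-biased distribution. -/
theorem zero_biased_density_is_probability_density
    {Ω : Type*} [MeasurableSpace Ω] (P : Measure Ω) [IsProbabilityMeasure P]
    (Y : Ω → ℝ) (hYmeas : Measurable Y)
    (h : ℝ → ℝ) (hhmeas : Measurable h) (hhnonneg : ∀ t, 0 ≤ h t)
    (hdens : Measure.map Y P = volume.withDensity fun t => ENNReal.ofReal (h t))
    (hL2 : MemLp Y 2 P)
    (hmean : ∫ ω, Y ω ∂P = 0)
    (hvar : ∫ ω, (Y ω) ^ 2 ∂P = 1) :
    (∀ w : ℝ, 0 ≤ ∫ t in Set.Ioi w, t * h t) ∧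
    (∫ w : ℝ, ∫ t in Set.Ioi w, t * h t) = 1 := by
  have hYint : Integrable Y P := hL2.integrable one_le_two
  have hY2int : Integrable (fun ω => Y ω ^ 2) P := hL2.integrable_sq
  have hdmeas : Measurable fun t : ℝ => ENNReal.ofReal (h t) := hhmeas.ennreal_ofReal
  have hdfin : ∀ᵐ t ∂(volume : Measure ℝ), ENNReal.ofReal (h t) < ⊤ :=
    Filter.Eventually.of_forall fun t => ENNReal.ofReal_lt_top
  -- integrability of x and x² w.r.t. the density measure, transferred to volume
  have hid_int : Integrable id (volume.withDensity fun t => ENNReal.ofReal (h t)) := by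
    rw [← hdens]
    exact (integrable_map_measure aestronglyMeasurable_id hYmeas.aemeasurable).2 hYint
  have hsq_int : Integrable (fun x => x ^ 2)
      (volume.withDensity fun t => ENNReal.ofReal (h t)) := by
    rw [← hdens]
    exact (integrable_map_measure (measurable_id.pow_const 2).aestronglyMeasurable
      hYmeas.aemeasurable).2 hY2int
  have htoReal : ∀ t : ℝ, (ENNReal.ofReal (h t)).toReal = h t :=
    fun t => ENNReal.toReal_ofReal (hhnonneg t)
  have hf1 : Integrable (fun t => t * h t) volume := by
    have := (integrable_withDensity_iff hdmeas hdfin).1 hid_int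
    simpa only [id_eq, htoReal] using this
  have hf2 : Integrable (fun t => t ^ 2 * h t) volume := by
    have := (integrable_withDensity_iff hdmeas hdfin).1 hsq_int
    simpa only [htoReal] using this
  -- density measure as an ℝ≥0-density
  have hd_eq : (volume.withDensity fun t => ENNReal.ofReal (h t))
      = volume.withDensity fun t => ((h t).toNNReal : ℝ≥0∞) := rfl
  have hnn_meas : Measurable fun t : ℝ => (h t).toNNReal := hhmeas.real_toNNReal
  have hcoe : ∀ t : ℝ, ((h t).toNNReal : ℝ) = h t := fun t => Real.coe_toNNReal _ (hhnonneg t)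
  -- the two moment identities
  have hI1 : ∫ t : ℝ, t * h t = 0 := by
    have h1 : ∫ x, x ∂(volume.withDensity fun t => ENNReal.ofReal (h t)) = 0 := by
      rw [← hdens, integral_map hYmeas.aemeasurable measurable_id'.aestronglyMeasurable]
      exact hmean
    rw [hd_eq, integral_withDensity_eq_integral_smul hnn_meas] at h1
    simp only [NNReal.smul_def, smul_eq_mul, hcoe] at h1
    rw [← h1]; exact integral_congr_ae (Filter.Eventually.of_forall fun t => mul_comm t (h t))
  have hI2 : ∫ t : ℝ, t ^ 2 * h t = 1 := by
    have h1 : ∫ x, x ^ 2 ∂(volume.withDensity fun t => ENNReal.ofReal (h t)) = 1 := by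
      rw [← hdens, integral_map hYmeas.aemeasurable (measurable_id'.pow_const 2).aestronglyMeasurable]
      exact hvar
    rw [hd_eq, integral_withDensity_eq_integral_smul hnn_meas] at h1
    simp only [NNReal.smul_def, smul_eq_mul, hcoe] at h1
    rw [← h1]
    exact integral_congr_ae (Filter.Eventually.of_forall fun t => mul_comm (t ^ 2) (h t))
  -- Part 1 : nonnegativity
  have hpos : ∀ w : ℝ, 0 ≤ ∫ t in Set.Ioi w, t * h t := by
    intro w
    rcases le_or_gt 0 w with hw | hw
    · exact setIntegral_nonneg measurableSet_Ioi fun t ht =>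
        mul_nonneg (hw.trans (le_of_lt ht)) (hhnonneg t)
    · have hsplit : (∫ t in Iic w, t * h t) + ∫ t in Ioi w, t * h t = ∫ t, t * h t :=
        intervalIntegral.integral_Iic_add_Ioi hf1.integrableOn hf1.integrableOn
      rw [hI1] at hsplit
      have hneg : ∫ t in Iic w, t * h t ≤ 0 :=
        setIntegral_nonpos measurableSet_Iic fun t ht =>
          mul_nonpos_iff.2 (Or.inr ⟨ht.trans hw.le, hhnonneg t⟩)
      linarith
  refine ⟨hpos, ?_⟩
  -- Part 2 : total mass 1
  set f : ℝ → ℝ := fun t => t * h t with hf_def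
  set p : ℝ → ℝ≥0∞ := fun t => ENNReal.ofReal (t * h t) with hp_def
  set q : ℝ → ℝ≥0∞ := fun t => ENNReal.ofReal (-(t * h t)) with hq_def
  have hp : Measurable p := (measurable_id.mul hhmeas).ennreal_ofReal
  have hq : Measurable q := (measurable_id.mul hhmeas).neg.ennreal_ofReal
  -- measurability of the inner integral
  have hFmeas : AEStronglyMeasurable (fun w => ∫ t in Set.Ioi w, t * h t) volume := by
    have hs : StronglyMeasurable fun z : ℝ × ℝ => (Ioi z.1).indicator f z.2 := by
      have heq : (fun z : ℝ × ℝ => (Ioi z.1).indicator f z.2)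
          = fun z : ℝ × ℝ => ({z : ℝ × ℝ | z.1 < z.2}).indicator (fun z => f z.2) z := by
        funext z; simp [Set.indicator_apply]
      rw [heq]
      exact (((measurable_snd.mul (hhmeas.comp measurable_snd))).indicator
        (measurableSet_lt measurable_fst measurable_snd)).stronglyMeasurable
    have := hs.integral_prod_right' (ν := volume)
    refine (this.aestronglyMeasurable).congr ?_
    exact Filter.Eventually.of_forall fun w => integral_indicator measurableSet_Ioi
  -- express the integral as a lintegral
  rw [integral_eq_lintegral_of_nonneg_ae (Filter.Eventually.of_forall hpos) hFmeas]
  have key : (∫⁻ w : ℝ, ENNReal.ofReal (∫ t in Set.Ioi w, t * h t)) = 1 := by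
    have hsplitL : (∫⁻ w : ℝ, ENNReal.ofReal (∫ t in Set.Ioi w, t * h t))
        = (∫⁻ w in Ici (0:ℝ), ENNReal.ofReal (∫ t in Set.Ioi w, t * h t))
          + ∫⁻ w in Iio (0:ℝ), ENNReal.ofReal (∫ t in Set.Ioi w, t * h t) := by
      rw [← lintegral_add_compl _ (measurableSet_Ici (a := (0:ℝ))), compl_Ici]
    -- positive-w piece
    have hA : (∫⁻ w in Ici (0:ℝ), ENNReal.ofReal (∫ t in Set.Ioi w, t * h t))
        = ∫⁻ t in Ici (0:ℝ), ENNReal.ofReal (t ^ 2 * h t) := by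
      have h1 : ∀ w ∈ Ici (0:ℝ),
          ENNReal.ofReal (∫ t in Set.Ioi w, t * h t) = ∫⁻ t in Ioi w, p t := by
        intro w hw
        exact ofReal_integral_eq_lintegral_ofReal hf1.integrableOn
          ((ae_restrict_iff' measurableSet_Ioi).2 (Filter.Eventually.of_forall fun t ht =>
            mul_nonneg (le_trans hw (le_of_lt ht)) (hhnonneg t)))
      rw [setLIntegral_congr_fun measurableSet_Ici h1]
      have h2 : ∀ w : ℝ, (∫⁻ t in Ioi w, p t) = ∫⁻ t, (Ioi w).indicator p t := by
        intro w; rw [lintegral_indicator measurableSet_Ioi]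
      simp_rw [h2]
      have hswap : (∫⁻ w in Ici (0:ℝ), ∫⁻ t, (Ioi w).indicator p t)
          = ∫⁻ t, ∫⁻ w in Ici (0:ℝ), (Ioi w).indicator p t := by
        refine lintegral_lintegral_swap ?_
        have heq : (Function.uncurry fun w t => (Ioi w).indicator p t)
            = fun z : ℝ × ℝ => ({z : ℝ × ℝ | z.1 < z.2}).indicator (fun z => p z.2) z := by
          funext z; simp [Function.uncurry, Set.indicator_apply]
        rw [heq]
        exact ((hp.comp measurable_snd).indicator
          (measurableSet_lt measurable_fst measurable_snd)).aemeasurable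
      rw [hswap]
      have h3 : ∀ t : ℝ, (∫⁻ w in Ici (0:ℝ), (Ioi w).indicator p t)
          = (Ici (0:ℝ)).indicator (fun t => ENNReal.ofReal (t ^ 2 * h t)) t := by
        intro t
        have hind : ∀ w : ℝ, (Ioi w).indicator p t = (Iio t).indicator (fun _ => p t) w := by
          intro w; simp [Set.indicator_apply, Set.mem_Ioi, Set.mem_Iio]
        simp_rw [hind]
        rw [lintegral_indicator measurableSet_Iio, setLIntegral_const,
          Measure.restrict_apply measurableSet_Iio]
        have hvol : (Iio t ∩ Ici (0:ℝ)) = Ico 0 t := by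
          ext x; simp [and_comm]
        rw [hvol, Real.volume_Ico, sub_zero]
        rcases le_or_gt 0 t with ht | ht
        · rw [Set.indicator_of_mem (mem_Ici.2 ht)]
          simp only [hp_def]
          rw [← ENNReal.ofReal_mul (mul_nonneg ht (hhnonneg t))]
          ring_nf
        · rw [Set.indicator_of_notMem (by simpa using not_le.2 ht),
            ENNReal.ofReal_of_nonpos ht.le, mul_zero]
      simp_rw [h3]
      rw [lintegral_indicator measurableSet_Ici]
    -- negative-w piece
    have hB : (∫⁻ w in Iio (0:ℝ), ENNReal.ofReal (∫ t in Set.Ioi w, t * h t))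
        = ∫⁻ t in Iio (0:ℝ), ENNReal.ofReal (t ^ 2 * h t) := by
      have h1 : ∀ w ∈ Iio (0:ℝ),
          ENNReal.ofReal (∫ t in Set.Ioi w, t * h t) = ∫⁻ t in Iic w, q t := by
        intro w hw
        have hsplit : (∫ t in Iic w, t * h t) + ∫ t in Ioi w, t * h t = ∫ t, t * h t :=
          intervalIntegral.integral_Iic_add_Ioi hf1.integrableOn hf1.integrableOn
        rw [hI1] at hsplit
        have hFw : (∫ t in Set.Ioi w, t * h t) = ∫ t in Iic w, -(t * h t) := by
          rw [integral_neg]; linarith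
        rw [hFw]
        exact ofReal_integral_eq_lintegral_ofReal hf1.neg.integrableOn
          ((ae_restrict_iff' measurableSet_Iic).2 (Filter.Eventually.of_forall fun t ht =>
            neg_nonneg.2 (mul_nonpos_iff.2 (Or.inr ⟨ht.trans hw.le, hhnonneg t⟩))))
      rw [setLIntegral_congr_fun measurableSet_Iio h1]
      have h2 : ∀ w : ℝ, (∫⁻ t in Iic w, q t) = ∫⁻ t, (Iic w).indicator q t := by
        intro w; rw [lintegral_indicator measurableSet_Iic]
      simp_rw [h2]
      have hswap : (∫⁻ w in Iio (0:ℝ), ∫⁻ t, (Iic w).indicator q t)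
          = ∫⁻ t, ∫⁻ w in Iio (0:ℝ), (Iic w).indicator q t := by
        refine lintegral_lintegral_swap ?_
        have heq : (Function.uncurry fun w t => (Iic w).indicator q t)
            = fun z : ℝ × ℝ => ({z : ℝ × ℝ | z.2 ≤ z.1}).indicator (fun z => q z.2) z := by
          funext z; simp [Function.uncurry, Set.indicator_apply]
        rw [heq]
        exact ((hq.comp measurable_snd).indicator
          (measurableSet_le measurable_snd measurable_fst)).aemeasurable
      rw [hswap]
      have h3 : ∀ t : ℝ, (∫⁻ w in Iio (0:ℝ), (Iic w).indicator q t)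
          = (Iio (0:ℝ)).indicator (fun t => ENNReal.ofReal (t ^ 2 * h t)) t := by
        intro t
        have hind : ∀ w : ℝ, (Iic w).indicator q t = (Ici t).indicator (fun _ => q t) w := by
          intro w; simp [Set.indicator_apply, Set.mem_Iic, Set.mem_Ici]
        simp_rw [hind]
        rw [lintegral_indicator measurableSet_Ici, setLIntegral_const,
          Measure.restrict_apply measurableSet_Ici]
        have hvol : (Ici t ∩ Iio (0:ℝ)) = Ico t 0 := by
          ext x; simp [and_comm]
        rw [hvol, Real.volume_Ico, zero_sub]
        rcases lt_or_ge t 0 with ht | ht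
        · rw [Set.indicator_of_mem (mem_Iio.2 ht)]
          simp only [hq_def]
          rw [← ENNReal.ofReal_mul (by nlinarith [hhnonneg t] : (0:ℝ) ≤ -(t * h t))]
          ring_nf
        · rw [Set.indicator_of_notMem (by simpa using ht)]
          simp only [hq_def]
          have : -(t * h t) ≤ 0 := neg_nonpos.2 (mul_nonneg ht (hhnonneg t))
          rw [ENNReal.ofReal_of_nonpos this, zero_mul]
      simp_rw [h3]
      rw [lintegral_indicator measurableSet_Iio]
    rw [hsplitL, hA, hB, ← compl_Ici (a := (0:ℝ)),
      lintegral_add_compl _ (measurableSet_Ici (a := (0:ℝ)))]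
    rw [← ofReal_integral_eq_lintegral_ofReal hf2
      (Filter.Eventually.of_forall fun t => mul_nonneg (sq_nonneg t) (hhnonneg t)), hI2]
    exact ENNReal.ofReal_one
  rw [key, ENNReal.toReal_one]
end

section
/- Let Y = (Y_1, ..., Y_d) be a random vector on ℝ^d whose law has Lebesgue density of the form y ↦ c · K(Σ_{l=1}^{d} ω_l y_l²) for some measurable K: ℝ → [0,∞), normalizing constant c > 0, and positive weights ω_1,...,ω_d > 0 (an elliptical density with diagonal matrix Ω = diag(ω_1,...,ω_d)), and suppose E|Y_k| < ∞ for each k. Then for each k, the conditional expectation of Y_k given the remaining coordinates is zero almost surely: E[Y_k | Y_1,...,Y_{k-1}, Y_{k+1},...,Y_d] = 0 = E[Y_k]. -/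
open MeasureTheory ProbabilityTheory
open scoped ENNReal

lemma map_withDensity_comp' {α : Type*} [MeasurableSpace α] (μ : Measure α) {g : α → α}
    (hg : Measurable g) {ρ : α → ℝ≥0∞} (hρ : Measurable ρ) :
    Measure.map g (μ.withDensity (ρ ∘ g)) = (Measure.map g μ).withDensity ρ := by
  ext s hs
  rw [Measure.map_apply hg hs, withDensity_apply _ (hg hs), withDensity_apply _ hs,
    setLIntegral_map hs hρ hg]
  rfl

/-- **Zero conditional means for uncorrelated elliptical distributions.**
If `Y = (Y_1,…,Y_d)` has an elliptical Lebesgue density `y ↦ cst · K(∑_l ω_l y_l²)` with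
positive weights `ω_l` (diagonal `Ω`), and `E|Y_k| < ∞` for each `k`, then for each `k`
the conditional expectation of `Y_k` given the remaining coordinates is `0` almost
surely, and `E[Y_k] = 0`. -/
theorem elliptical_zero_conditional_mean
    {Ω : Type*} [MeasurableSpace Ω] (P : Measure Ω) [IsProbabilityMeasure P]
    (d : ℕ) (Y : Ω → Fin d → ℝ) (hYmeas : Measurable Y)
    (K : ℝ → ℝ) (hKmeas : Measurable K) (hKnonneg : ∀ t, 0 ≤ K t)
    (cst : ℝ) (hcst : 0 < cst)
    (w : Fin d → ℝ) (hw : ∀ l, 0 < w l)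
    (hdens : Measure.map Y P
      = (volume : Measure (Fin d → ℝ)).withDensity
          fun y => ENNReal.ofReal (cst * K (∑ l, w l * (y l) ^ 2)))
    (hint : ∀ k, Integrable (fun ω => Y ω k) P)
    (k : Fin d) :
    P[(fun ω => Y ω k) |
        MeasurableSpace.comap (fun ω (l : {l : Fin d // l ≠ k}) => Y ω l.1) inferInstance]
      =ᵐ[P] 0 ∧
    ∫ ω, Y ω k ∂P = 0 := by
  classical
  set μ : Measure (Fin d → ℝ) := Measure.map Y P with hμ
  set ρ : (Fin d → ℝ) → ℝ≥0∞ :=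
    fun y => ENNReal.ofReal (cst * K (∑ l, w l * (y l) ^ 2)) with hρdef
  have hρmeas : Measurable ρ := by
    apply Measurable.ennreal_ofReal
    exact (measurable_const.mul (hKmeas.comp (Finset.measurable_sum _ fun l _ =>
      measurable_const.mul ((measurable_pi_apply l).pow measurable_const))))
  -- the coordinate-k negation map
  set f : Fin d → ℝ → ℝ := fun l x => if l = k then -x else x with hfdef
  set N : (Fin d → ℝ) → (Fin d → ℝ) := fun y l => f l (y l) with hNdef
  have hNvol : MeasurePreserving N volume volume := by
    apply volume_preserving_pi
    intro l
    by_cases h : l = k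
    · simpa [f, h] using Measure.measurePreserving_neg (volume : Measure ℝ)
    · convert MeasurePreserving.id (volume : Measure ℝ) using 1; funext x; simp [f, h]
  have hNmeas : Measurable N := hNvol.measurable
  have hρN : ρ ∘ N = ρ := by
    funext y
    have hsum : (∑ l, w l * (N y l) ^ 2) = ∑ l, w l * (y l) ^ 2 := by
      refine Finset.sum_congr rfl fun l _ => ?_
      by_cases h : l = k <;> simp [N, f, h, neg_sq]
    simp only [Function.comp_apply, hρdef, hsum]
  have hNk : ∀ y, N y k = -(y k) := fun y => by simp [N, f]
  have hNmap : Measure.map N μ = μ := by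
    rw [hdens]
    calc Measure.map N ((volume : Measure (Fin d → ℝ)).withDensity ρ)
        = Measure.map N ((volume : Measure (Fin d → ℝ)).withDensity (ρ ∘ N)) := by rw [hρN]
      _ = (Measure.map N (volume : Measure (Fin d → ℝ))).withDensity ρ :=
          map_withDensity_comp' _ hNmeas hρmeas
      _ = (volume : Measure (Fin d → ℝ)).withDensity ρ := by rw [hNvol.map_eq]
  have hasm : AEStronglyMeasurable (fun y : Fin d → ℝ => y k) μ :=
    (measurable_pi_apply k).aestronglyMeasurable
  -- key symmetry
  have key : ∀ B : Set (Fin d → ℝ), MeasurableSet B → (∀ y, N y ∈ B ↔ y ∈ B) →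
      ∫ y in B, y k ∂μ = 0 := by
    intro B hB hBN
    set F : (Fin d → ℝ) → ℝ := B.indicator (fun y => y k) with hFdef
    have hFmeas : Measurable F := (measurable_pi_apply k).indicator hB
    have h1 : ∫ y, F y ∂μ = ∫ y, F (N y) ∂μ := by
      conv_lhs => rw [← hNmap]
      exact integral_map hNmeas.aemeasurable (by rw [hNmap]; exact hFmeas.aestronglyMeasurable)
    have h2 : ∀ y, F (N y) = -(F y) := by
      intro y
      by_cases hy : y ∈ B
      · simp [F, Set.indicator_apply, (hBN y).mpr hy, hy, hNk y]
      · have hNy : N y ∉ B := fun h => hy ((hBN y).mp h)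
        simp [F, Set.indicator_apply, hy, hNy]
    have h3 : ∫ y, F y ∂μ = -∫ y, F y ∂μ := by
      conv_lhs => rw [h1]
      simp_rw [h2]
      exact integral_neg _
    have h4 : ∫ y, F y ∂μ = 0 := by linarith
    rw [← integral_indicator hB]
    exact h4
  have hEzero : ∫ ω, Y ω k ∂P = 0 := by
    have : ∫ ω, Y ω k ∂P = ∫ y, y k ∂μ := (integral_map hYmeas.aemeasurable hasm).symm
    rw [this, ← setIntegral_univ]
    exact key Set.univ MeasurableSet.univ (fun y => Iff.rfl)
  refine ⟨?_, hEzero⟩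
  have hφ : Measurable (fun ω (l : {l : Fin d // l ≠ k}) => Y ω l.1) :=
    measurable_pi_iff.mpr fun l => (measurable_pi_apply l.1).comp hYmeas
  refine (ae_eq_condExp_of_forall_setIntegral_eq hφ.comap_le (hint k)
    (fun s _ _ => (integrable_zero _ _ _).integrableOn) (fun s hs _ => ?_)
    (StronglyMeasurable.aestronglyMeasurable stronglyMeasurable_zero)).symm
  simp only [Pi.zero_apply, integral_zero]
  obtain ⟨t, ht, rfl⟩ := hs
  set r : (Fin d → ℝ) → ({l : Fin d // l ≠ k} → ℝ) := fun y l => y l.1 with hrdef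
  have hr : Measurable r := measurable_pi_iff.mpr fun l => measurable_pi_apply l.1
  set B : Set (Fin d → ℝ) := r ⁻¹' t with hBdef
  have hB : MeasurableSet B := hr ht
  have hpre : (fun ω (l : {l : Fin d // l ≠ k}) => Y ω l.1) ⁻¹' t = Y ⁻¹' B := rfl
  have hBN : ∀ y, N y ∈ B ↔ y ∈ B := by
    intro y
    have : r (N y) = r y := by
      funext l
      simp [r, N, f, l.2]
    simp [B, Set.mem_preimage, this]
  rw [hpre, ← setIntegral_map hB hasm hYmeas.aemeasurable]
  exact (key B hB hBN).symm
end
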